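/- Let k > 0, α ∈ (−π, 0) and (x, y) ∈ ℝ². Then the function F(R) = ∫₀^π (cos(θ+α) − 1)·exp(−ik(x cos θ + y sin θ))·exp(ikR cos(θ+α)) dθ satisfies F(R) = O(R^{−1}) as R → ∞. -/

import Mathlib

open scoped Real

open Complex Set intervalIntegral

private lemma tan_half_mul_sin {u : ℝ} (hc : Real.cos (u / 2) ≠ 0) :
    Real.tan (u / 2) * Real.sin u = 1 - Real.cos u := by
  have hs : Real.sin u = 2 * Real.sin (u / 2) * Real.cos (u / 2) := by
    rw [← Real.sin_two_mul]; ring_nf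
  have hcu : Real.cos u = 2 * Real.cos (u / 2) ^ 2 - 1 := by
    rw [← Real.cos_two_mul]; ring_nf
  have hsq : Real.sin (u / 2) ^ 2 + Real.cos (u / 2) ^ 2 = 1 := Real.sin_sq_add_cos_sq _
  have h2 : Real.tan (u / 2) * Real.sin u = 2 * Real.sin (u / 2) ^ 2 := by
    rw [Real.tan_eq_sin_div_cos, hs]
    field_simp
  rw [h2, hcu]
  linarith

private lemma one_add_tan_sq' {u : ℝ} (hc : Real.cos u ≠ 0) :
    1 / Real.cos u ^ 2 = 1 + Real.tan u ^ 2 := by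
  have hsq : Real.sin u ^ 2 + Real.cos u ^ 2 = 1 := Real.sin_sq_add_cos_sq _
  rw [Real.tan_eq_sin_div_cos]
  field_simp
  linarith [hsq]

/-- The integration-by-parts estimate for the up-going plane wave contribution over the
upper semicircle: `F(R) = ∫₀^π (cos(θ+α) - 1) e^{-ik(x cos θ + y sin θ)} e^{ikR cos(θ+α)} dθ`
is `O(R⁻¹)` as `R → ∞`. -/
theorem stmt6 (k α x y : ℝ) (hk : 0 < k) (hα : α ∈ Set.Ioo (-π) 0) :
    (fun R : ℝ => ∫ θ in (0 : ℝ)..π,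
        ((Real.cos (θ + α) - 1 : ℝ) : ℂ) *
          Complex.exp (-Complex.I * (k : ℂ) * ((x * Real.cos θ + y * Real.sin θ : ℝ) : ℂ)) *
          Complex.exp (Complex.I * (k : ℂ) * (R : ℂ) * ((Real.cos (θ + α) : ℝ) : ℂ)))
      =O[Filter.atTop] fun R : ℝ => R⁻¹ := by
  obtain ⟨hα1, hα2⟩ := hα
  have hπ : (0 : ℝ) < π := Real.pi_pos
  have huIcc : Set.uIcc (0 : ℝ) π = Set.Icc 0 π := Set.uIcc_of_le hπ.le
  -- the half-angle cosine never vanishes on [0, π]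
  have hcos : ∀ θ ∈ Set.Icc (0 : ℝ) π, Real.cos ((θ + α) / 2) ≠ 0 := by
    intro θ hθ
    have hmem : (θ + α) / 2 ∈ Set.Ioo (-(π / 2)) (π / 2) := by
      constructor
      · linarith [hθ.1]
      · linarith [hθ.2]
    exact (Real.cos_pos_of_mem_Ioo hmem).ne'
  -- auxiliary functions
  set E : ℝ → ℂ := fun θ =>
    Complex.exp (-Complex.I * (k : ℂ) * ((x * Real.cos θ + y * Real.sin θ : ℝ) : ℂ)) with hEdef
  set T : ℝ → ℝ := fun θ => Real.tan ((θ + α) / 2) with hTdef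
  set h : ℝ → ℂ := fun θ => ((T θ : ℝ) : ℂ) * E θ with hhdef
  set h' : ℝ → ℂ := fun θ =>
    (((1 + T θ ^ 2) / 2 : ℝ) : ℂ) * E θ +
      ((T θ : ℝ) : ℂ) *
        (E θ * (-Complex.I * (k : ℂ) * ((x * -Real.sin θ + y * Real.cos θ : ℝ) : ℂ))) with hh'def
  set v : ℝ → ℝ → ℂ := fun R θ =>
    Complex.exp (Complex.I * (k : ℂ) * (R : ℂ) * ((Real.cos (θ + α) : ℝ) : ℂ)) with hvdef
  -- derivative of E
  have hE : ∀ θ : ℝ, HasDerivAt E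
      (E θ * (-Complex.I * (k : ℂ) * ((x * -Real.sin θ + y * Real.cos θ : ℝ) : ℂ))) θ := by
    intro θ
    have d1 : HasDerivAt (fun θ : ℝ => x * Real.cos θ + y * Real.sin θ)
        (x * -Real.sin θ + y * Real.cos θ) θ :=
      ((Real.hasDerivAt_cos θ).const_mul x).add ((Real.hasDerivAt_sin θ).const_mul y)
    exact ((d1.ofReal_comp).const_mul (-Complex.I * (k : ℂ))).cexp
  -- derivative of h
  have hder : ∀ θ ∈ Set.Icc (0 : ℝ) π, HasDerivAt h (h' θ) θ := by
    intro θ hθ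
    have hc := hcos θ hθ
    have daff : HasDerivAt (fun θ : ℝ => (θ + α) / 2) (1 / 2) θ := by
      simpa using ((hasDerivAt_id θ).add_const α).div_const 2
    have dtan : HasDerivAt T ((1 + T θ ^ 2) / 2) θ := by
      have := (Real.hasDerivAt_tan hc).comp θ daff
      have heq : 1 / Real.cos ((θ + α) / 2) ^ 2 * (1 / 2) = (1 + T θ ^ 2) / 2 := by
        rw [one_add_tan_sq' hc]
        simp only [hTdef]
        ring
      rw [heq] at this
      exact this
    have := (dtan.ofReal_comp).mul (hE θ)
    exact this
  -- derivative of v R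
  have hv : ∀ R θ : ℝ, HasDerivAt (v R)
      (v R θ * (Complex.I * (k : ℂ) * (R : ℂ) * ((-Real.sin (θ + α) : ℝ) : ℂ))) θ := by
    intro R θ
    have d1 : HasDerivAt (fun θ : ℝ => Real.cos (θ + α)) (-Real.sin (θ + α)) θ := by
      have := (Real.hasDerivAt_cos (θ + α)).comp θ ((hasDerivAt_id θ).add_const α)
      simp only [Function.comp_def, id_eq, id, mul_one] at this
      exact this
    exact ((d1.ofReal_comp).const_mul (Complex.I * (k : ℂ) * (R : ℂ))).cexp
  -- continuity of T on [0, π]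
  have hTcont : ContinuousOn T (Set.Icc (0 : ℝ) π) := by
    intro θ hθ
    have haff : ContinuousAt (fun θ : ℝ => (θ + α) / 2) θ := by fun_prop
    have : ContinuousAt (fun θ : ℝ => Real.tan ((θ + α) / 2)) θ :=
      ContinuousAt.comp (g := Real.tan) (f := fun θ : ℝ => (θ + α) / 2)
        (Real.continuousAt_tan.mpr (hcos θ hθ)) haff
    exact this.continuousWithinAt
  have hEcont : Continuous E := by
    apply Complex.continuous_exp.comp
    fun_prop
  have hh'cont : ContinuousOn h' (Set.Icc (0 : ℝ) π) := by
    apply ContinuousOn.add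
    · exact ((Complex.continuous_ofReal.comp_continuousOn
        (((continuousOn_const.add ((hTcont.pow 2))).div_const 2)))).mul hEcont.continuousOn
    · exact (Complex.continuous_ofReal.comp_continuousOn hTcont).mul
        (hEcont.continuousOn.mul (by fun_prop))
  -- norm of v is 1
  have hvnorm : ∀ R θ : ℝ, ‖v R θ‖ = 1 := by
    intro R θ
    have harg : Complex.I * (k : ℂ) * (R : ℂ) * ((Real.cos (θ + α) : ℝ) : ℂ) =
        ((k * R * Real.cos (θ + α) : ℝ) : ℂ) * Complex.I := by push_cast; ring
    rw [hvdef]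
    simp only [harg, Complex.norm_exp_ofReal_mul_I]
  -- the integration by parts identity
  have key : ∀ R : ℝ, Complex.I * (k : ℂ) * (R : ℂ) *
      (∫ θ in (0 : ℝ)..π,
        ((Real.cos (θ + α) - 1 : ℝ) : ℂ) *
          Complex.exp (-Complex.I * (k : ℂ) * ((x * Real.cos θ + y * Real.sin θ : ℝ) : ℂ)) *
          Complex.exp (Complex.I * (k : ℂ) * (R : ℂ) * ((Real.cos (θ + α) : ℝ) : ℂ))) =
      h π * v R π - h 0 * v R 0 - ∫ θ in (0 : ℝ)..π, h' θ * v R θ := by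
    intro R
    have hint1 : IntervalIntegrable h' MeasureTheory.volume 0 π :=
      (huIcc ▸ hh'cont : ContinuousOn h' (Set.uIcc 0 π)).intervalIntegrable
    have hint2 : IntervalIntegrable
        (fun θ => v R θ * (Complex.I * (k : ℂ) * (R : ℂ) * ((-Real.sin (θ + α) : ℝ) : ℂ)))
        MeasureTheory.volume 0 π := by
      apply Continuous.intervalIntegrable
      have hvc : Continuous (v R) := by
        apply Complex.continuous_exp.comp
        fun_prop
      fun_prop
    have hIBP := intervalIntegral.integral_mul_deriv_eq_deriv_mul
      (u := h) (v := v R) (u' := h')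
      (v' := fun θ => v R θ * (Complex.I * (k : ℂ) * (R : ℂ) * ((-Real.sin (θ + α) : ℝ) : ℂ)))
      (fun θ hθ => hder θ (huIcc ▸ hθ)) (fun θ _ => hv R θ) hint1 hint2
    have hcongr : (∫ θ in (0 : ℝ)..π, Complex.I * (k : ℂ) * (R : ℂ) *
        (((Real.cos (θ + α) - 1 : ℝ) : ℂ) *
          Complex.exp (-Complex.I * (k : ℂ) * ((x * Real.cos θ + y * Real.sin θ : ℝ) : ℂ)) *
          Complex.exp (Complex.I * (k : ℂ) * (R : ℂ) * ((Real.cos (θ + α) : ℝ) : ℂ)))) =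
        ∫ θ in (0 : ℝ)..π, h θ *
          (v R θ * (Complex.I * (k : ℂ) * (R : ℂ) * ((-Real.sin (θ + α) : ℝ) : ℂ))) := by
      apply intervalIntegral.integral_congr
      intro θ hθ
      have hθ' : θ ∈ Set.Icc (0 : ℝ) π := huIcc ▸ hθ
      have hid : Real.cos (θ + α) - 1 = T θ * -Real.sin (θ + α) := by
        have := tan_half_mul_sin (hcos θ hθ')
        simp only [hTdef]
        linarith
      simp only [hhdef, hvdef, hEdef]
      rw [hid]
      push_cast
      ring
    rw [← intervalIntegral.integral_const_mul, hcongr, hIBP]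
  -- uniform bound on h'
  obtain ⟨B, hB⟩ := isCompact_Icc.exists_bound_of_continuousOn hh'cont
  have hB0 : 0 ≤ B := le_trans (norm_nonneg _) (hB 0 ⟨le_refl _, hπ.le⟩)
  set C : ℝ := ‖h π‖ + ‖h 0‖ + B * π with hCdef
  rw [Asymptotics.isBigO_iff]
  refine ⟨C / k, ?_⟩
  filter_upwards [Filter.eventually_ge_atTop 1] with R hR
  have hR0 : (0 : ℝ) < R := lt_of_lt_of_le one_pos hR
  have hInt : ‖∫ θ in (0 : ℝ)..π, h' θ * v R θ‖ ≤ B * π := by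
    have hb : ∀ θ ∈ Set.uIoc (0 : ℝ) π, ‖h' θ * v R θ‖ ≤ B := by
      intro θ hθ
      have hθ' : θ ∈ Set.Icc (0 : ℝ) π := by
        rw [Set.uIoc_of_le hπ.le] at hθ
        exact ⟨hθ.1.le, hθ.2⟩
      rw [norm_mul, hvnorm R θ, mul_one]
      exact hB θ hθ'
    have := intervalIntegral.norm_integral_le_of_norm_le_const hb
    simpa [abs_of_pos hπ, mul_comm] using this
  have h1 : ‖h π * v R π - h 0 * v R 0 - ∫ θ in (0 : ℝ)..π, h' θ * v R θ‖ ≤ C := by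
    calc ‖h π * v R π - h 0 * v R 0 - ∫ θ in (0 : ℝ)..π, h' θ * v R θ‖
        ≤ ‖h π * v R π - h 0 * v R 0‖ + ‖∫ θ in (0 : ℝ)..π, h' θ * v R θ‖ := norm_sub_le _ _
      _ ≤ (‖h π * v R π‖ + ‖h 0 * v R 0‖) + B * π := add_le_add (norm_sub_le _ _) hInt
      _ = C := by rw [hCdef]; simp [norm_mul, hvnorm]
  set FR : ℂ := ∫ θ in (0 : ℝ)..π,
      ((Real.cos (θ + α) - 1 : ℝ) : ℂ) *
        Complex.exp (-Complex.I * (k : ℂ) * ((x * Real.cos θ + y * Real.sin θ : ℝ) : ℂ)) *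
        Complex.exp (Complex.I * (k : ℂ) * (R : ℂ) * ((Real.cos (θ + α) : ℝ) : ℂ)) with hFRdef
  have h2 : ‖Complex.I * (k : ℂ) * (R : ℂ) * FR‖ = k * R * ‖FR‖ := by
    simp [norm_mul, Complex.norm_real, abs_of_pos hk, abs_of_pos hR0]
  have h3 : k * R * ‖FR‖ ≤ C := by
    rw [← h2, key R]
    exact h1
  rw [Real.norm_eq_abs, abs_inv, abs_of_pos hR0]
  have heq : C / k * R⁻¹ = C / (k * R) := by field_simp
  rw [heq, le_div_iff₀ (by positivity)]
  calc ‖FR‖ * (k * R) = k * R * ‖FR‖ := by ring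
    _ ≤ C := h3
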